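/- Let C be a compact convex body in ℝ², centrally symmetric with center p. If there exists a point x ∈ ∂C that is not an endpoint of any diameter segment of C, then C can be partitioned into two subsets each of diameter strictly less than diam(C). (The segment joining x to its reflection 2p − x splits every diameter segment, and the two resulting pieces have strictly smaller diameter.) -/

import Mathlib

private theorem aux_diam_attained {E : Type*} [NormedAddCommGroup E] (K : Set E)
    (hK : IsCompact K) (hne : K.Nonempty) :
    ∃ a ∈ K, ∃ b ∈ K, dist a b = Metric.diam K := by
  have hc : ContinuousOn (fun q : E × E => dist q.1 q.2) (K ×ˢ K) :=
    continuous_dist.continuousOn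
  obtain ⟨⟨a, b⟩, hab, hmax⟩ := (hK.prod hK).exists_isMaxOn (hne.prod hne) hc
  refine ⟨a, hab.1, b, hab.2, le_antisymm (Metric.dist_le_diam_of_mem hK.isBounded hab.1 hab.2) ?_⟩
  exact Metric.diam_le_of_forall_dist_le dist_nonneg fun x hx y hy => hmax (Set.mk_mem_prod hx hy)

theorem nonendpoint_implies_partition
    (C : Set (EuclideanSpace ℝ (Fin 2))) (p : EuclideanSpace ℝ (Fin 2))
    (hC : IsCompact C) (hconv : Convex ℝ C) (hint : (interior C).Nonempty)
    (hsym : ∀ x ∈ C, (2 : ℝ) • p - x ∈ C)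
    (hx : ∃ x ∈ frontier C, ¬ ∃ y ∈ C, dist x y = Metric.diam C) :
    ∃ C₁ C₂ : Set (EuclideanSpace ℝ (Fin 2)), C = C₁ ∪ C₂ ∧
      Metric.diam C₁ < Metric.diam C ∧ Metric.diam C₂ < Metric.diam C := by
  obtain ⟨x₀, hx₀f, hx₀d⟩ := hx
  set D := Metric.diam C with hD
  have hCcl : IsClosed C := hC.isClosed
  have hx₀C : x₀ ∈ C := hCcl.frontier_subset hx₀f
  -- p is an interior point
  have hpint : p ∈ interior C := by
    obtain ⟨q, hq⟩ := hint
    by_cases hqp : q = p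
    · rwa [hqp] at hq
    · have hq2 : (2 : ℝ) • p - q ∈ C := hsym q (interior_subset hq)
      have : p ∈ openSegment ℝ q ((2 : ℝ) • p - q) :=
        ⟨1/2, 1/2, by norm_num, by norm_num, by norm_num, by module⟩
      exact hconv.openSegment_interior_self_subset_interior hq hq2 this
  have hx₀ni : x₀ ∉ interior C := fun h => hx₀f.2 h
  have hv : x₀ - p ≠ 0 := sub_ne_zero.mpr (fun h => hx₀ni (h ▸ hpint))
  set v : EuclideanSpace ℝ (Fin 2) := x₀ - p with hvdef
  -- doubling identity
  have hdouble : ∀ z : EuclideanSpace ℝ (Fin 2), dist z ((2 : ℝ) • p - z) = 2 * dist z p := by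
    intro z
    have : z - ((2 : ℝ) • p - z) = (2 : ℝ) • (z - p) := by module
    rw [dist_eq_norm, dist_eq_norm, this, norm_smul]
    norm_num
  -- every point is within D/2 of p
  have hD2 : ∀ a ∈ C, dist a p ≤ D / 2 := by
    intro a ha
    have h1 : dist a ((2 : ℝ) • p - a) ≤ D :=
      Metric.dist_le_diam_of_mem hC.isBounded ha (hsym a ha)
    rw [hdouble a] at h1; linarith
  -- diametral pairs are antipodal
  have hanti : ∀ a ∈ C, ∀ b ∈ C, dist a b = D → b = (2 : ℝ) • p - a := by
    intro a ha b hb hab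
    have h1 : dist a p ≤ D / 2 := hD2 a ha
    have h2 : dist b p ≤ D / 2 := hD2 b hb
    have htri : dist a b ≤ dist a p + dist p b := dist_triangle a p b
    rw [dist_comm p b] at htri
    have e1 : dist a p = D / 2 := by linarith
    have e2 : dist b p = D / 2 := by linarith
    have heq : a - p = p - b := by
      apply eq_of_norm_eq_of_norm_add_eq
      · rw [← dist_eq_norm, ← dist_eq_norm, e1, dist_comm p b, e2]
      · have h3 : a - p + (p - b) = a - b := by abel
        rw [h3, ← dist_eq_norm, ← dist_eq_norm, ← dist_eq_norm, hab, e1, dist_comm p b, e2]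
        ring
    have hb2 : b - p = p - a := by
      have h4 : -(a - p) = -(p - b) := congrArg Neg.neg heq
      simpa [neg_sub] using h4.symm
    have h5 : b = p + (p - a) := by rw [← hb2]; abel
    rw [h5, two_smul]; abel
  -- the splitting functional
  set f : EuclideanSpace ℝ (Fin 2) → ℝ := fun z => v 0 * z 1 - v 1 * z 0 with hfdef
  have hfcont : Continuous f := by
    apply Continuous.sub
    · exact continuous_const.mul (PiLp.continuous_apply _ _ (1 : Fin 2))
    · exact continuous_const.mul (PiLp.continuous_apply _ _ (0 : Fin 2))
  have hf2 : ∀ z, f ((2 : ℝ) • p - z) = 2 * f p - f z := by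
    intro z
    simp only [hfdef, PiLp.sub_apply, PiLp.smul_apply, smul_eq_mul]
    ring
  -- points of C on the line {f = f p} are within dist x₀ p of p
  have hline : ∀ a ∈ C, f a = f p → dist a p ≤ dist x₀ p := by
    -- first: no point of C of the form p + t • v with t > 1
    have hnot : ∀ t : ℝ, 1 < t → ∀ a ∈ C, a - p = t • v → False := by
      intro t ht a ha hav
      have htne : t ≠ 0 := by linarith
      have hseg : x₀ ∈ openSegment ℝ p a := by
        refine ⟨1 - 1/t, 1/t, by rw [sub_pos, div_lt_one (by linarith)]; linarith,
          by positivity, by ring, ?_⟩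
        have hA : a = p + t • v := by rw [← hav]; abel
        rw [hA, hvdef]
        match_scalars <;> field_simp <;> ring
      exact hx₀ni (hconv.openSegment_interior_self_subset_interior hpint ha hseg)
    intro a ha hfa
    have hw : v 0 * (a 1 - p 1) = v 1 * (a 0 - p 0) := by
      have h := hfa
      simp only [hfdef] at h
      linear_combination h
    have hv01 : v 0 ≠ 0 ∨ v 1 ≠ 0 := by
      by_contra h
      push_neg at h
      exact hv (by ext i; fin_cases i <;> simp [h.1, h.2])
    obtain ⟨t, ht⟩ : ∃ t : ℝ, a - p = t • v := by
      rcases hv01 with h | h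
      · refine ⟨(a 0 - p 0) / v 0, ?_⟩
        ext i
        fin_cases i <;> simp only [PiLp.smul_apply, PiLp.sub_apply, smul_eq_mul, Fin.zero_eta, Fin.mk_one]
        · field_simp
        · field_simp
          linear_combination hw
      · refine ⟨(a 1 - p 1) / v 1, ?_⟩
        ext i
        fin_cases i <;> simp only [PiLp.smul_apply, PiLp.sub_apply, smul_eq_mul, Fin.zero_eta, Fin.mk_one]
        · field_simp
          linear_combination -hw
        · field_simp
    have htle : |t| ≤ 1 := by
      by_contra h
      push_neg at h
      rcases lt_or_ge t 0 with htneg | htpos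
      · have ht' : 1 < -t := by
          rcases abs_cases t with ⟨h1, _⟩ | ⟨h1, _⟩ <;> linarith
        exact hnot (-t) ht' ((2 : ℝ) • p - a) (hsym a ha)
          (by rw [neg_smul, ← ht]; module)
      · have ht' : 1 < t := by
          rcases abs_cases t with ⟨h1, _⟩ | ⟨h1, _⟩ <;> linarith
        exact hnot t ht' a ha ht
    calc dist a p = ‖a - p‖ := dist_eq_norm a p
      _ = ‖t • v‖ := by rw [ht]
      _ = |t| * ‖v‖ := by rw [norm_smul, Real.norm_eq_abs]
      _ ≤ 1 * ‖v‖ := by gcongr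
      _ = dist x₀ p := by rw [one_mul, hvdef, ← dist_eq_norm]
  have hpC : p ∈ C := interior_subset hpint
  -- the key half-plane lemma
  have key : ∀ g : EuclideanSpace ℝ (Fin 2) → ℝ, Continuous g →
      (∀ z, g ((2 : ℝ) • p - z) = 2 * g p - g z) →
      (∀ a ∈ C, g a = g p → dist a p ≤ dist x₀ p) →
      Metric.diam (C ∩ {z | g p ≤ g z}) < D := by
    intro g hgc hg2 hgl
    set K := C ∩ {z | g p ≤ g z} with hK
    have hKcomp : IsCompact K := hC.inter_right (isClosed_le continuous_const hgc)
    have hKne : K.Nonempty := ⟨p, ⟨hpC, Set.mem_setOf_eq ▸ le_refl (g p)⟩⟩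
    have hKle : Metric.diam K ≤ D := Metric.diam_mono Set.inter_subset_left hC.isBounded
    rcases lt_or_eq_of_le hKle with h | h
    · exact h
    exfalso
    obtain ⟨a, haK, b, hbK, hab⟩ := aux_diam_attained K hKcomp hKne
    rw [h] at hab
    have hb : b = (2 : ℝ) • p - a := hanti a haK.1 b hbK.1 hab
    have hga : g a = g p := by
      have h1 : g p ≤ g a := haK.2
      have h2 : g p ≤ g b := hbK.2
      rw [hb, hg2] at h2
      linarith
    have hap : dist a p ≤ dist x₀ p := hgl a haK.1 hga
    have haD : dist a p = D / 2 := by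
      have : dist a b = 2 * dist a p := by rw [hb]; exact hdouble a
      rw [hab] at this; linarith
    have hx₀D : dist x₀ ((2 : ℝ) • p - x₀) = D := by
      have hle : dist x₀ ((2 : ℝ) • p - x₀) ≤ D :=
        Metric.dist_le_diam_of_mem hC.isBounded hx₀C (hsym x₀ hx₀C)
      have hge : D ≤ dist x₀ ((2 : ℝ) • p - x₀) := by
        rw [hdouble x₀]; linarith
      linarith
    exact hx₀d ⟨(2 : ℝ) • p - x₀, hsym x₀ hx₀C, hx₀D⟩
  refine ⟨C ∩ {z | f p ≤ f z}, C ∩ {z | (fun w => -(f w)) p ≤ (fun w => -(f w)) z}, ?_, ?_, ?_⟩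
  · ext z
    constructor
    · intro hz
      rcases le_total (f p) (f z) with h | h
      · exact Or.inl ⟨hz, h⟩
      · exact Or.inr ⟨hz, by simpa using h⟩
    · rintro (⟨hz, _⟩ | ⟨hz, _⟩) <;> exact hz
  · exact key f hfcont hf2 hline
  · exact key (fun w => -(f w)) hfcont.neg
      (fun z => by simp [hf2 z]; ring)
      (fun a ha h => hline a ha (by linarith [neg_injective h]))
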